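/- Let X be a spectral space. Then: (1) if X is finite with n elements, the Krull dimension of 𝒳(X) equals n − 1; (2) if X is infinite, the Krull dimension of 𝒳(X) is infinite; (3) in all cases dim(𝒳(X)) ≥ dim(X); and (4) if X is finite, then dim(𝒳(X)) = dim(X) if and only if the specialization order ≤ on X is a total (linear) order. -/

import Mathlib

open Set TopologicalSpace Topology

/-- A subset of a topological space is *inverse-closed* if it is an intersection of a
family of quasi-compact open subsets. -/
def InvClosed {X : Type*} [TopologicalSpace X] (Y : Set X) : Prop :=
  ∃ 𝒪 : Set (Set X), (∀ U ∈ 𝒪, IsOpen U ∧ IsCompact U) ∧ Y = ⋂₀ 𝒪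

/-- A subset is *saturated* if it is an intersection of open sets. -/
def IsSatd {X : Type*} [TopologicalSpace X] (Y : Set X) : Prop :=
  ∃ 𝒪 : Set (Set X), (∀ U ∈ 𝒪, IsOpen U) ∧ Y = ⋂₀ 𝒪

/-- A topological space is *spectral* if it is T0, quasi-compact, sober, and the
quasi-compact open subsets form a basis closed under finite intersections. -/
def IsSpectralSpace (X : Type*) [TopologicalSpace X] : Prop :=
  T0Space X ∧ CompactSpace X ∧ QuasiSober X ∧
    IsTopologicalBasis {U : Set X | IsOpen U ∧ IsCompact U} ∧
    ∀ U V : Set X, IsOpen U → IsCompact U → IsOpen V → IsCompact V → IsCompact (U ∩ V)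

/-- `𝒳(X)`: the nonempty inverse-closed subsets of `X`. -/
abbrev XCal (X : Type*) [TopologicalSpace X] : Type _ :=
  {Y : Set X // Y.Nonempty ∧ InvClosed Y}

/-- The Zariski topology on `𝒳(X)`, with basic open sets `𝒰(Ω) = {Y : Y ⊆ Ω}` for `Ω`
quasi-compact open in `X`. -/
instance XCal.instTop (X : Type*) [TopologicalSpace X] : TopologicalSpace (XCal X) :=
  generateFrom {S : Set (XCal X) | ∃ Ω : Set X, IsOpen Ω ∧ IsCompact Ω ∧
    S = {Y : XCal X | (Y : Set X) ⊆ Ω}}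

/-- The specialization-type order: `x ≤ y` iff `y ∈ closure {x}`. -/
def spord {X : Type*} [TopologicalSpace X] (x y : X) : Prop := y ∈ closure {x}

/-- Closure under generizations of a set `S`: all points `z ≤ s` for some `s ∈ S`. -/
def genOf {X : Type*} [TopologicalSpace X] (S : Set X) : Set X :=
  {z : X | ∃ s ∈ S, spord z s}

/-- A map is *spectral* if preimages of quasi-compact open sets are quasi-compact open. -/
def SpecMap {X Y : Type*} [TopologicalSpace X] [TopologicalSpace Y] (f : X → Y) : Prop :=
  ∀ Ω : Set Y, IsOpen Ω → IsCompact Ω → IsOpen (f ⁻¹' Ω) ∧ IsCompact (f ⁻¹' Ω)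

/-- The constructible topology on a spectral space: generated by the quasi-compact open
sets together with their complements. -/
def constructibleTop (X : Type*) [TopologicalSpace X] : TopologicalSpace X :=
  generateFrom ({U : Set X | IsOpen U ∧ IsCompact U} ∪
    {S : Set X | ∃ U : Set X, IsOpen U ∧ IsCompact U ∧ S = Uᶜ})

/-- `s` is the supremum of `S` for the order induced by the topology. -/
def IsSupOf {X : Type*} [TopologicalSpace X] (S : Set X) (s : X) : Prop :=
  (∀ c ∈ S, spord c s) ∧ ∀ t : X, (∀ c ∈ S, spord c t) → spord s t

/-- A map is sup-preserving if it sends existing finite suprema to suprema. -/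
def SupPreserving {X Y : Type*} [TopologicalSpace X] [TopologicalSpace Y] (f : X → Y) : Prop :=
  ∀ F : Set X, F.Finite → ∀ s : X, IsSupOf F s → IsSupOf (f '' F) (f s)

/-- A map is open onto its image. -/
def OpenOntoImage {X Y : Type*} [TopologicalSpace X] [TopologicalSpace Y] (f : X → Y) : Prop :=
  ∀ V : Set X, IsOpen V → ∃ W : Set Y, IsOpen W ∧ f '' V = W ∩ Set.range f

section Aux
open Order

lemma spord_iff {T : Type*} [TopologicalSpace T] {x y : T} : spord x y ↔ x ⤳ y :=
  specializes_iff_mem_closure.symm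

lemma quasiSober_of_finite {T : Type*} [TopologicalSpace T] [Finite T] : QuasiSober T := by
  classical
  constructor
  intro S hirr hcl
  have hfin : S.Finite := S.toFinite
  rw [isIrreducible_iff_sUnion_isClosed] at hirr
  have h1 : ∀ z ∈ hfin.toFinset.image (fun x => closure {x}), IsClosed z := by
    intro z hz
    obtain ⟨x, _, rfl⟩ := Finset.mem_image.mp hz
    exact isClosed_closure
  have h2 : S ⊆ ⋃₀ ↑(hfin.toFinset.image (fun x => closure {x})) := by
    intro x hx
    refine mem_sUnion.mpr ⟨closure {x}, ?_, subset_closure rfl⟩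
    exact Finset.mem_coe.mpr (Finset.mem_image.mpr ⟨x, hfin.mem_toFinset.mpr hx, rfl⟩)
  obtain ⟨Z, hZc, hZ⟩ := hirr (hfin.toFinset.image (fun x => closure {x})) h1 h2
  obtain ⟨z, hz, hze⟩ := Finset.mem_image.mp hZc
  refine ⟨z, ?_⟩
  have hzS : z ∈ S := hfin.mem_toFinset.mp hz
  have hsub : S ⊆ closure {z} := by rw [hze]; exact hZ
  exact le_antisymm (closure_minimal (singleton_subset_iff.mpr hzS) hcl) hsub

lemma topKrullDim_eq_spec (T : Type*) [TopologicalSpace T] [T0Space T] [QuasiSober T] :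
    topologicalKrullDim T = Order.krullDim (Specialization T) := by
  letI := specializationOrder T
  have h1 : Order.krullDim (IrreducibleCloseds T) = Order.krullDim T :=
    Order.krullDim_eq_of_orderIso irreducibleSetEquivPoints
  have h2 : Order.krullDim T = Order.krullDim (Specialization T) :=
    Order.krullDim_eq_of_orderIso
      { toFun := Specialization.toEquiv, invFun := Specialization.ofEquiv,
        left_inv := fun _ => rfl, right_inv := fun _ => rfl,
        map_rel_iff' := Iff.rfl }
  exact h1.trans h2

lemma spec_le_topKrullDim (T : Type*) [TopologicalSpace T] [T0Space T] :
    Order.krullDim (Specialization T) ≤ topologicalKrullDim T := by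
  refine Order.krullDim_le_of_strictMono
    (fun x => ⟨closure {Specialization.ofEquiv x}, isIrreducible_singleton.closure,
      isClosed_closure⟩) ?_
  intro a b hab
  have hs : Specialization.ofEquiv b ⤳ Specialization.ofEquiv a := hab.le
  have hle : closure {Specialization.ofEquiv a} ⊆ closure {Specialization.ofEquiv b} :=
    closure_minimal (singleton_subset_iff.mpr hs.mem_closure) isClosed_closure
  refine lt_of_le_of_ne hle ?_
  intro heq
  have hc : closure {Specialization.ofEquiv a} = closure {Specialization.ofEquiv b} :=
    congrArg TopologicalSpace.IrreducibleCloseds.carrier heq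
  have h2 : Specialization.ofEquiv a ⤳ Specialization.ofEquiv b := by
    rw [specializes_iff_mem_closure, hc]
    exact subset_closure rfl
  exact absurd (le_antisymm hab.le h2 : a = b) hab.ne

section Spectral
variable {X : Type*} [TopologicalSpace X]

lemma spord_refl (x : X) : spord x x := subset_closure rfl

lemma spord_trans {x y z : X} (h1 : spord x y) (h2 : spord y z) : spord x z :=
  spord_iff.mpr ((spord_iff.mp h1).trans (spord_iff.mp h2))

lemma spord_antisymm [T0Space X] {x y : X} (h1 : spord x y) (h2 : spord y x) : x = y :=
  ((spord_iff.mp h1).antisymm (spord_iff.mp h2)).eq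

lemma mem_genOf_singleton {x z : X} : z ∈ genOf {x} ↔ spord z x := by
  simp [genOf]

lemma self_mem_genOf {S : Set X} {x : X} (hx : x ∈ S) : x ∈ genOf S :=
  ⟨x, hx, spord_refl x⟩

lemma genOf_mono {S T : Set X} (h : S ⊆ T) : genOf S ⊆ genOf T :=
  fun z ⟨s, hs, hzs⟩ => ⟨s, h hs, hzs⟩

lemma genOf_singleton_subset {x y : X} (h : spord x y) : genOf {x} ⊆ genOf {y} := by
  intro z hz
  exact mem_genOf_singleton.mpr (spord_trans (mem_genOf_singleton.mp hz) h)

lemma invClosed_genOf_singleton (hB : IsTopologicalBasis {U : Set X | IsOpen U ∧ IsCompact U})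
    (x : X) : InvClosed (genOf {x}) := by
  refine ⟨{Ω | (IsOpen Ω ∧ IsCompact Ω) ∧ x ∈ Ω}, fun U hU => hU.1, ?_⟩
  ext z
  simp only [mem_sInter, mem_setOf_eq, mem_genOf_singleton]
  constructor
  · intro hz Ω hΩ
    obtain ⟨w, hwΩ, hw⟩ := mem_closure_iff.mp hz Ω hΩ.1.1 hΩ.2
    rwa [← (mem_singleton_iff.mp hw)]
  · intro h
    rw [spord, mem_closure_iff]
    intro U hU hxU
    obtain ⟨Ω, hΩb, hxΩ, hΩU⟩ := hB.exists_subset_of_mem_open hxU hU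
    exact ⟨z, hΩU (h Ω ⟨hΩb, hxΩ⟩), rfl⟩

lemma InvClosed.union {A B : Set X} (hA : InvClosed A) (hB : InvClosed B) :
    InvClosed (A ∪ B) := by
  obtain ⟨𝒪, h𝒪, rfl⟩ := hA
  obtain ⟨𝒬, h𝒬, rfl⟩ := hB
  refine ⟨(fun p : Set X × Set X => p.1 ∪ p.2) '' (𝒪 ×ˢ 𝒬), ?_, ?_⟩
  · rintro U ⟨⟨U1, U2⟩, ⟨hU1, hU2⟩, rfl⟩
    exact ⟨(h𝒪 U1 hU1).1.union (h𝒬 U2 hU2).1, (h𝒪 U1 hU1).2.union (h𝒬 U2 hU2).2⟩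
  · ext z
    simp only [mem_union, mem_sInter, mem_image, Prod.exists, mem_prod]
    constructor
    · rintro (h | h) U ⟨U1, U2, ⟨h1, h2⟩, rfl⟩
      · exact Or.inl (h U1 h1)
      · exact Or.inr (h U2 h2)
    · intro h
      by_cases hz : ∀ U ∈ 𝒪, z ∈ U
      · exact Or.inl hz
      · push_neg at hz
        obtain ⟨U0, hU0, hzU0⟩ := hz
        refine Or.inr (fun V hV => ?_)
        rcases h (U0 ∪ V) ⟨U0, V, ⟨hU0, hV⟩, rfl⟩ with h' | h'
        · exact absurd h' hzU0
        · exact h'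

lemma genOf_empty : genOf (∅ : Set X) = ∅ := by
  ext z; simp [genOf]

lemma genOf_insert (x : X) (S : Set X) : genOf (insert x S) = genOf {x} ∪ genOf S := by
  ext z
  simp only [genOf, mem_insert_iff, mem_union, mem_setOf_eq, mem_singleton_iff]
  constructor
  · rintro ⟨s, (rfl | hs), hzs⟩
    · exact Or.inl ⟨s, rfl, hzs⟩
    · exact Or.inr ⟨s, hs, hzs⟩
  · rintro (⟨s, rfl, hzs⟩ | ⟨s, hs, hzs⟩)
    · exact ⟨s, Or.inl rfl, hzs⟩
    · exact ⟨s, Or.inr hs, hzs⟩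

lemma invClosed_empty : InvClosed (∅ : Set X) :=
  ⟨{∅}, fun U hU => by simp at hU; simp [hU, isCompact_empty], by simp⟩

lemma invClosed_genOf_finite (hB : IsTopologicalBasis {U : Set X | IsOpen U ∧ IsCompact U})
    {S : Set X} (hS : S.Finite) : InvClosed (genOf S) := by
  refine Set.Finite.induction_on (motive := fun s _ => InvClosed (genOf s)) S hS ?_ ?_
  · show InvClosed (genOf ∅); rw [genOf_empty]; exact invClosed_empty
  · intro a s _ _ ih
    show InvClosed (genOf (insert a s))
    rw [genOf_insert]
    exact (invClosed_genOf_singleton hB _).union ih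

lemma xcal_spord_iff {Y Z : XCal X} : spord Y Z ↔ (Y : Set X) ⊆ (Z : Set X) := by
  constructor
  · intro h
    obtain ⟨𝒪, h𝒪, hZeq⟩ := Z.2.2
    have key : ∀ Ω ∈ 𝒪, (Y : Set X) ⊆ Ω := by
      intro Ω hΩ
      have hopen : IsOpen {W : XCal X | (W : Set X) ⊆ Ω} :=
        isOpen_generateFrom_of_mem ⟨Ω, (h𝒪 Ω hΩ).1, (h𝒪 Ω hΩ).2, rfl⟩
      have hZmem : Z ∈ {W : XCal X | (W : Set X) ⊆ Ω} := by
        show (Z : Set X) ⊆ Ω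
        rw [hZeq]
        exact sInter_subset_of_mem hΩ
      obtain ⟨W, hW1, hW2⟩ := mem_closure_iff.mp h _ hopen hZmem
      rwa [← (mem_singleton_iff.mp hW2)]
    have : (Y : Set X) ⊆ ⋂₀ 𝒪 := subset_sInter key
    rwa [← hZeq] at this
  · intro hsub
    have key : ∀ o : Set (XCal X), IsOpen o → Z ∈ o → Y ∈ o := by
      intro o ho
      have ho' : GenerateOpen {S : Set (XCal X) | ∃ Ω : Set X, IsOpen Ω ∧ IsCompact Ω ∧
          S = {Y : XCal X | (Y : Set X) ⊆ Ω}} o := ho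
      clear ho
      induction ho' with
      | basic s hs =>
          obtain ⟨Ω, _, _, rfl⟩ := hs
          exact fun hZ => hsub.trans hZ
      | univ => exact fun _ => trivial
      | inter s t _ _ ihs iht => exact fun hZ => ⟨ihs hZ.1, iht hZ.2⟩
      | sUnion S _ ih =>
          rintro ⟨s, hsS, hZs⟩
          exact ⟨s, hsS, ih s hsS hZs⟩
    rw [spord, mem_closure_iff]
    exact fun o ho hZo => ⟨Y, key o ho hZo, rfl⟩

lemma xcal_t0 : T0Space (XCal X) := by
  rw [t0Space_iff_inseparable]
  intro Y Z h
  rw [inseparable_iff_mem_closure] at h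
  exact Subtype.ext (le_antisymm (xcal_spord_iff.mp h.2) (xcal_spord_iff.mp h.1))

lemma xcal_spec_le_iff {A B : Specialization (XCal X)} :
    A ≤ B ↔ ((Specialization.ofEquiv B : XCal X) : Set X) ⊆
      ((Specialization.ofEquiv A : XCal X) : Set X) := by
  rw [← Specialization.ofEquiv_specializes_ofEquiv, ← spord_iff, xcal_spord_iff]

end Spectral

section PartC
open Order Specialization

lemma ltSeries_length_lt_nat_card {α : Type*} [Preorder α] [Finite α] (p : LTSeries α) :
    p.length + 1 ≤ Nat.card α := by
  have h1 : p.length + 1 = Nat.card (Fin (p.length + 1)) := by simp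
  rw [h1]
  exact Nat.card_le_card_of_injective p.toFun p.strictMono.injective

lemma krullDim_le_coe {α : Type*} [Preorder α] {m : ℕ}
    (h : ∀ p : LTSeries α, p.length ≤ m) : Order.krullDim α ≤ (m : WithBot ℕ∞) :=
  iSup_le fun p => by exact_mod_cast h p

lemma irrCl_isEmpty {T : Type*} [TopologicalSpace T] [IsEmpty T] :
    IsEmpty (IrreducibleCloseds T) :=
  ⟨fun C => by obtain ⟨x, -⟩ := C.isIrreducible'.1; exact isEmptyElim x⟩

variable {X : Type*} [TopologicalSpace X]

lemma exists_spord_max (hT0 : T0Space X) {S : Set X} (hfin : S.Finite) (hne : S.Nonempty) :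
    ∃ z ∈ S, ∀ y ∈ S, spord z y → z = y := by
  haveI := hT0
  letI := specializationOrder X
  obtain ⟨z, hz, hmax⟩ := Set.Finite.exists_maximalFor (OrderDual.toDual : X → Xᵒᵈ) S hfin hne
  refine ⟨z, hz, fun y hy hzy => ?_⟩
  have hle : OrderDual.toDual z ≤ OrderDual.toDual y := spord_iff.mp hzy
  exact OrderDual.toDual.injective (le_antisymm hle (hmax hy hle))

lemma genOf_diff_subset {S : Set X} (hgen : genOf S ⊆ S) {z : X} (hzS : z ∈ S)
    (hmax : ∀ y ∈ S, spord z y → z = y) : genOf (S \ {z}) ⊆ S \ {z} := by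
  rintro w ⟨s, ⟨hsS, hsz⟩, hws⟩
  refine ⟨hgen ⟨s, hsS, hws⟩, ?_⟩
  intro hw
  rw [mem_singleton_iff] at hw
  subst hw
  exact hsz (mem_singleton_iff.mpr (hmax s hsS hws).symm)

lemma exists_set_chain (hT0 : T0Space X) :
    ∀ k : ℕ, ∀ S : Set X, S.Finite → genOf S ⊆ S → k + 1 ≤ S.ncard →
    ∃ f : Fin (k + 1) → Set X, StrictMono f ∧
      (∀ i, (f i).Nonempty ∧ (f i).Finite ∧ genOf (f i) ⊆ f i) ∧ f (Fin.last k) = S := by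
  intro k
  induction k with
  | zero =>
    intro S hfin hgen hcard
    refine ⟨fun _ => S, ?_, ?_, rfl⟩
    · intro i j hij
      exfalso
      omega
    · intro i
      exact ⟨(Set.ncard_pos hfin).mp (by omega), hfin, hgen⟩
  | succ k ih =>
    intro S hfin hgen hcard
    have hne : S.Nonempty := (Set.ncard_pos hfin).mp (by omega)
    obtain ⟨z, hzS, hmax⟩ := exists_spord_max hT0 hfin hne
    have hfin' : (S \ {z}).Finite := hfin.diff
    have hgen' : genOf (S \ {z}) ⊆ S \ {z} := genOf_diff_subset hgen hzS hmax
    have hcard' : k + 1 ≤ (S \ {z}).ncard := by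
      rw [Set.ncard_diff_singleton_of_mem hzS]
      omega
    obtain ⟨f, hmono, hprop, hlast⟩ := ih (S \ {z}) hfin' hgen' hcard'
    have hSS : S \ {z} ⊂ S := Set.sdiff_singleton_ssubset.mpr hzS
    refine ⟨Fin.snoc f S, ?_, ?_, ?_⟩
    · intro i j hij
      by_cases hj : j = Fin.last (k + 1)
      · subst hj
        have hi : i ≠ Fin.last (k + 1) := ne_of_lt hij
        have hieq : i = Fin.castSucc (i.castPred hi) := (Fin.castSucc_castPred i hi).symm
        rw [hieq, Fin.snoc_castSucc, Fin.snoc_last]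
        have h1 : f (i.castPred hi) ⊆ f (Fin.last k) := hmono.monotone (Fin.le_last _)
        rw [hlast] at h1
        exact lt_of_le_of_lt h1 hSS
      · have hjeq : j = Fin.castSucc (j.castPred hj) := (Fin.castSucc_castPred j hj).symm
        have hi : i ≠ Fin.last (k + 1) :=
          ne_of_lt (lt_of_lt_of_le hij (hjeq ▸ (Fin.castSucc_lt_last _).le))
        have hieq : i = Fin.castSucc (i.castPred hi) := (Fin.castSucc_castPred i hi).symm
        rw [hieq, hjeq, Fin.snoc_castSucc, Fin.snoc_castSucc]
        apply hmono
        rw [hieq, hjeq] at hij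
        exact Fin.castSucc_lt_castSucc_iff.mp hij
    · intro i
      by_cases hi : i = Fin.last (k + 1)
      · subst hi
        rw [Fin.snoc_last]
        exact ⟨hne, hfin, hgen⟩
      · have hieq : i = Fin.castSucc (i.castPred hi) := (Fin.castSucc_castPred i hi).symm
        rw [hieq, Fin.snoc_castSucc]
        exact hprop _
    · rw [Fin.snoc_last]

lemma invClosed_of_finite_gen (hB : IsTopologicalBasis {U : Set X | IsOpen U ∧ IsCompact U})
    {S : Set X} (hfin : S.Finite) (hgen : genOf S ⊆ S) : InvClosed S := by
  have hSeq : S = genOf S := le_antisymm (fun x hx => self_mem_genOf hx) hgen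
  rw [hSeq]
  exact invClosed_genOf_finite hB hfin

/-- The map `x ↦ genOf {x}` as a strictly monotone map into `Specialization (XCal X)`. -/
lemma genOf_map_strictMono (hT0 : T0Space X)
    (hB : IsTopologicalBasis {U : Set X | IsOpen U ∧ IsCompact U}) :
    StrictMono (fun x : Specialization X =>
      Specialization.toEquiv (⟨genOf ({Specialization.ofEquiv x} : Set X),
        ⟨Specialization.ofEquiv x, self_mem_genOf rfl⟩,
        invClosed_genOf_singleton hB _⟩ : XCal X)) := by
  haveI := hT0
  haveI := xcal_t0 (X := X)
  intro a b hab
  have hs : spord (Specialization.ofEquiv b) (Specialization.ofEquiv a) := spord_iff.mpr hab.le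
  have hsub : genOf ({Specialization.ofEquiv b} : Set X) ⊆
      genOf ({Specialization.ofEquiv a} : Set X) := genOf_singleton_subset hs
  refine lt_of_le_of_ne (xcal_spec_le_iff.mpr hsub) ?_
  intro h
  have heq : genOf ({Specialization.ofEquiv a} : Set X) =
      genOf ({Specialization.ofEquiv b} : Set X) :=
    congrArg (fun A => ((Specialization.ofEquiv A : XCal X) : Set X)) h
  have hxy : spord (Specialization.ofEquiv a) (Specialization.ofEquiv b) :=
    mem_genOf_singleton.mp
      (heq ▸ self_mem_genOf (rfl : Specialization.ofEquiv a ∈ ({Specialization.ofEquiv a} : Set X)))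
  exact hab.ne (Specialization.ofEquiv.injective (spord_antisymm hxy hs))

end PartC

section PartD
open Order Specialization

variable {X : Type*} [TopologicalSpace X]

lemma part1 (hX : IsSpectralSpace X) {n : ℕ} (hn : 0 < n) (hcard : Nat.card X = n) :
    topologicalKrullDim (XCal X) = ((n - 1 : ℕ) : WithBot ℕ∞) := by
  obtain ⟨hT0, hcomp, hsober, hB, hcap⟩ := hX
  haveI := hT0
  haveI : Finite X := Nat.finite_of_card_ne_zero (by omega)
  haveI : Finite (XCal X) := Subtype.finite
  haveI := xcal_t0 (X := X)
  haveI : QuasiSober (XCal X) := quasiSober_of_finite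
  rw [topKrullDim_eq_spec]
  apply le_antisymm
  · apply krullDim_le_coe
    intro q
    have hanti : ∀ i j : Fin (q.length + 1), i < j →
        ((Specialization.ofEquiv (q j) : XCal X) : Set X).ncard <
        ((Specialization.ofEquiv (q i) : XCal X) : Set X).ncard := by
      intro i j hij
      have hlt := q.strictMono hij
      have hle : ((Specialization.ofEquiv (q j) : XCal X) : Set X) ⊆
          ((Specialization.ofEquiv (q i) : XCal X) : Set X) := xcal_spec_le_iff.mp hlt.le
      have hne : ((Specialization.ofEquiv (q j) : XCal X) : Set X) ≠
          ((Specialization.ofEquiv (q i) : XCal X) : Set X) := by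
        intro h
        exact hlt.ne (Specialization.ofEquiv.injective (Subtype.ext h)).symm
      exact Set.ncard_lt_ncard (ssubset_of_subset_of_ne hle hne) (Set.toFinite _)
    set c : Fin (q.length + 1) → ℕ :=
      fun i => ((Specialization.ofEquiv (q i) : XCal X) : Set X).ncard with hc
    have hmem : ∀ i, c i ∈ Finset.Icc 1 n := by
      intro i
      refine Finset.mem_Icc.mpr ⟨?_, ?_⟩
      · exact (Set.ncard_pos (Set.toFinite _)).mpr (Specialization.ofEquiv (q i) : XCal X).2.1
      · calc c i ≤ (Set.univ : Set X).ncard :=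
              Set.ncard_le_ncard (Set.subset_univ _) Set.finite_univ
          _ = n := by rw [Set.ncard_univ, hcard]
    have hinj : Function.Injective (fun i => (⟨c i, hmem i⟩ : (Finset.Icc 1 n))) := by
      intro i j h
      simp only [Subtype.mk.injEq] at h
      by_contra hne
      rcases lt_or_gt_of_ne hne with hlt | hlt
      · exact absurd h.symm (ne_of_lt (hanti i j hlt))
      · exact absurd h (ne_of_lt (hanti j i hlt))
    have hcle := Fintype.card_le_of_injective _ hinj
    simp only [Fintype.card_fin, Fintype.card_coe, Nat.card_Icc] at hcle
    omega
  · obtain ⟨f, hmono, hprop, -⟩ := exists_set_chain hT0 (n - 1) Set.univ Set.finite_univ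
      (Set.subset_univ _) (by rw [Set.ncard_univ, hcard]; omega)
    set g : Fin (n - 1 + 1) → Specialization (XCal X) := fun i =>
      Specialization.toEquiv (⟨f i.rev, (hprop i.rev).1,
        invClosed_of_finite_gen hB (hprop i.rev).2.1 (hprop i.rev).2.2⟩ : XCal X) with hg
    have hgmono : StrictMono g := by
      intro i j hij
      have hrev : j.rev < i.rev := Fin.rev_lt_rev.mpr hij
      have hsub : f j.rev ⊆ f i.rev := (hmono hrev).le
      refine lt_of_le_of_ne (xcal_spec_le_iff.mpr hsub) ?_
      intro h
      have heqf : f i.rev = f j.rev :=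
        congrArg (fun A => ((Specialization.ofEquiv A : XCal X) : Set X)) h
      exact (hmono hrev).ne heqf.symm
    have hle := LTSeries.length_le_krullDim (LTSeries.mk (n - 1) g hgmono)
    exact_mod_cast hle

lemma part2 (hX : IsSpectralSpace X) (hinf : Infinite X) :
    topologicalKrullDim (XCal X) = ⊤ := by
  obtain ⟨hT0, hcomp, hsober, hB, hcap⟩ := hX
  haveI := hT0
  haveI := xcal_t0 (X := X)
  suffices h : ∀ n : ℕ, ∃ p : LTSeries (Specialization (XCal X)), p.length = n by
    haveI : InfiniteDimensionalOrder (Specialization (XCal X)) := ⟨h⟩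
    have htop : Order.krullDim (Specialization (XCal X)) = ⊤ :=
      Order.krullDim_eq_top
    exact le_antisymm le_top (htop ▸ spec_le_topKrullDim (XCal X))
  intro n
  by_cases hh : ∃ x : Specialization X, (n : ℕ∞) ≤ Order.height x
  · obtain ⟨x, hx⟩ := hh
    obtain ⟨p, -, hlen⟩ := Order.exists_series_of_le_height x hx
    exact ⟨p.map _ (genOf_map_strictMono hT0 hB), by simpa using hlen⟩
  · push_neg at hh
    haveI : Infinite (Specialization X) := hinf
    have hex : ∃ k : ℕ, {x : Specialization X | Order.height x = (k : ℕ∞)}.Infinite := by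
      by_contra hc
      push_neg at hc
      have hcover : (Set.univ : Set (Specialization X)) ⊆
          ⋃ k ∈ Finset.range n, {x : Specialization X | Order.height x = (k : ℕ∞)} := by
        intro x _
        have hxlt := hh x
        obtain ⟨k, hk⟩ := WithTop.ne_top_iff_exists.mp (ne_top_of_lt hxlt)
        have hkn : k < n := by
          rw [← hk] at hxlt
          exact Nat.cast_lt.mp hxlt
        exact Set.mem_biUnion (Finset.mem_range.mpr hkn) hk.symm
      have hfin : (Set.univ : Set (Specialization X)).Finite :=
        Set.Finite.subset (Set.Finite.biUnion (Finset.range n).finite_toSet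
          (fun k _ => hc k)) hcover
      exact Set.infinite_univ hfin
    obtain ⟨k, hk⟩ := hex
    obtain ⟨t, hts, htc⟩ := hk.exists_subset_card_eq (n + 1)
    set a : Fin (n + 1) → Specialization X := fun i => ((t.equivFinOfCardEq htc).symm i : _)
      with ha
    have ha_inj : Function.Injective a := fun i j h =>
      (t.equivFinOfCardEq htc).symm.injective (Subtype.ext h)
    have ha_h : ∀ i, Order.height (a i) = (k : ℕ∞) := fun i =>
      hts ((t.equivFinOfCardEq htc).symm i).2
    have hincomp : ∀ i j : Fin (n + 1), i ≠ j →
        ¬ spord (Specialization.ofEquiv (a i)) (Specialization.ofEquiv (a j)) := by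
      intro i j hij hsp
      have hle : a j ≤ a i := spord_iff.mp hsp
      have hlt : a j < a i := lt_of_le_of_ne hle (fun h => hij (ha_inj h).symm)
      have hfin : Order.height (a j) < ⊤ := by
        rw [ha_h]
        exact WithTop.coe_lt_top k
      have hcon := Order.height_strictMono hlt hfin
      rw [ha_h, ha_h] at hcon
      exact lt_irrefl _ hcon
    set T : Fin (n + 1) → Set X := fun m =>
      genOf ((fun i => Specialization.ofEquiv (a i)) '' {i | i ≤ m}) with hT
    have hTinv : ∀ m, InvClosed (T m) := fun m => invClosed_genOf_finite hB (Set.toFinite _)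
    have hTne : ∀ m, (T m).Nonempty := fun m =>
      ⟨Specialization.ofEquiv (a m), self_mem_genOf ⟨m, le_refl m, rfl⟩⟩
    have hTmono : ∀ {i j : Fin (n + 1)}, i ≤ j → T i ⊆ T j := fun {i j} h =>
      genOf_mono (Set.image_mono (fun x hx => le_trans hx h))
    have hTstrict : ∀ {i j : Fin (n + 1)}, i < j → T i ≠ T j := by
      intro i j hij heq
      have hmem : Specialization.ofEquiv (a j) ∈ T i := by
        rw [heq]
        exact self_mem_genOf ⟨j, le_refl j, rfl⟩
      obtain ⟨s, ⟨i', hi', rfl⟩, hsp⟩ := hmem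
      have hji' : j ≠ i' := fun h => absurd (h ▸ hi') (not_le.mpr hij)
      exact hincomp j i' hji' hsp
    set g : Fin (n + 1) → Specialization (XCal X) := fun m =>
      Specialization.toEquiv (⟨T m.rev, hTne _, hTinv _⟩ : XCal X) with hgdef
    have hg : StrictMono g := by
      intro i j hij
      have hrev : j.rev < i.rev := Fin.rev_lt_rev.mpr hij
      have h1 : T j.rev ⊆ T i.rev := hTmono hrev.le
      refine lt_of_le_of_ne (xcal_spec_le_iff.mpr h1) ?_
      intro h
      have heq : T i.rev = T j.rev :=
        congrArg (fun A => ((Specialization.ofEquiv A : XCal X) : Set X)) h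
      exact hTstrict hrev heq.symm
    exact ⟨LTSeries.mk n g hg, rfl⟩

lemma part3 (hX : IsSpectralSpace X) :
    topologicalKrullDim X ≤ topologicalKrullDim (XCal X) := by
  obtain ⟨hT0, hcomp, hsober, hB, hcap⟩ := hX
  haveI := hT0
  haveI := hsober
  haveI := xcal_t0 (X := X)
  rw [topKrullDim_eq_spec X]
  exact le_trans (Order.krullDim_le_of_strictMono _ (genOf_map_strictMono hT0 hB))
    (spec_le_topKrullDim (XCal X))

lemma part4 (hX : IsSpectralSpace X) (hfin : Finite X) :
    (topologicalKrullDim (XCal X) = topologicalKrullDim X ↔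
      ∀ x y : X, spord x y ∨ spord y x) := by
  by_cases hne : Nonempty X
  · have hT0 : T0Space X := hX.1
    have hsober : QuasiSober X := hX.2.2.1
    haveI := hT0
    haveI := hsober
    have hn : 0 < Nat.card X := Nat.card_pos
    have h1 : topologicalKrullDim (XCal X) = ((Nat.card X - 1 : ℕ) : WithBot ℕ∞) :=
      part1 hX hn rfl
    have hspec : topologicalKrullDim X = Order.krullDim (Specialization X) :=
      topKrullDim_eq_spec X
    haveI : Finite (Specialization X) := Finite.of_equiv X Specialization.toEquiv
    have hcardS : Nat.card (Specialization X) = Nat.card X :=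
      Nat.card_congr Specialization.ofEquiv
    have hub : ∀ p : LTSeries (Specialization X), p.length ≤ Nat.card X - 1 := by
      intro p
      have hcl := ltSeries_length_lt_nat_card p
      omega
    constructor
    · intro heq
      rw [h1, hspec] at heq
      have hex : ∃ p : LTSeries (Specialization X), p.length = Nat.card X - 1 := by
        by_contra hc
        push_neg at hc
        rcases Nat.eq_zero_or_pos (Nat.card X - 1) with h0 | hpos
        · obtain ⟨x⟩ := hne
          refine absurd ?_ (hc (RelSeries.singleton _ (Specialization.toEquiv x)))
          simp [h0, RelSeries.singleton]
        · have hub2 : ∀ p : LTSeries (Specialization X), p.length ≤ Nat.card X - 2 := by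
            intro p
            have h1' := hub p
            have h2' := hc p
            omega
          have hgle := krullDim_le_coe hub2
          rw [← heq] at hgle
          have hnn : (Nat.card X - 1 : ℕ) ≤ (Nat.card X - 2 : ℕ) := by exact_mod_cast hgle
          omega
      obtain ⟨p, hp⟩ := hex
      set b : Fin (Nat.card X) → Specialization X :=
        fun i => p (Fin.cast (by omega) i) with hb
      have hbinj : Function.Injective b := by
        intro i j h
        have hcc := p.strictMono.injective h
        have := congrArg Fin.val hcc
        exact Fin.ext (by simpa using this)
      haveI : Fintype (Specialization X) := Fintype.ofFinite _
      have hcards : Fintype.card (Fin (Nat.card X)) = Fintype.card (Specialization X) := by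
        rw [Fintype.card_fin, ← Nat.card_eq_fintype_card, hcardS]
      have hbsurj : Function.Surjective b :=
        ((Fintype.bijective_iff_injective_and_card b).mpr ⟨hbinj, hcards⟩).2
      intro x y
      obtain ⟨i, hi⟩ := hbsurj (Specialization.toEquiv x)
      obtain ⟨j, hj⟩ := hbsurj (Specialization.toEquiv y)
      rcases le_total i j with hij | hij
      · have hbb : b i ≤ b j := p.strictMono.monotone
          (by rw [Fin.le_def, Fin.coe_cast, Fin.coe_cast]; exact hij)
        rw [hi, hj] at hbb
        exact Or.inr (spord_iff.mpr (Specialization.toEquiv_le_toEquiv.mp hbb))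
      · have hbb : b j ≤ b i := p.strictMono.monotone
          (by rw [Fin.le_def, Fin.coe_cast, Fin.coe_cast]; exact hij)
        rw [hi, hj] at hbb
        exact Or.inl (spord_iff.mpr (Specialization.toEquiv_le_toEquiv.mp hbb))
    · intro htot
      letI : LinearOrder (Specialization X) :=
        { (inferInstance : PartialOrder (Specialization X)) with
          le_total := by
            intro u v
            rcases htot (Specialization.ofEquiv u) (Specialization.ofEquiv v) with h | h
            · exact Or.inr (spord_iff.mp h)
            · exact Or.inl (spord_iff.mp h)
          toDecidableLE := Classical.decRel _ }
      haveI : Fintype (Specialization X) := Fintype.ofFinite _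
      have hcards : Fintype.card (Specialization X) = Nat.card X := by
        rw [← Nat.card_eq_fintype_card, hcardS]
      set e := monoEquivOfFin (Specialization X) hcards with he
      have hg : StrictMono (fun i : Fin (Nat.card X - 1 + 1) => e (Fin.cast (by omega) i)) :=
        fun i j hij => e.strictMono (by rw [Fin.lt_def, Fin.coe_cast, Fin.coe_cast]; exact hij)
      have hle := LTSeries.length_le_krullDim (LTSeries.mk (Nat.card X - 1) _ hg)
      rw [h1, hspec]
      exact le_antisymm (by exact_mod_cast hle) (krullDim_le_coe hub)
  · haveI : IsEmpty X := not_nonempty_iff.mp hne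
    haveI : IsEmpty (XCal X) := ⟨fun Y => Y.2.1.elim (fun x _ => isEmptyElim x)⟩
    haveI := irrCl_isEmpty (T := X)
    haveI := irrCl_isEmpty (T := XCal X)
    constructor
    · intro _ x
      exact isEmptyElim x
    · intro _
      show Order.krullDim (IrreducibleCloseds (XCal X)) = Order.krullDim (IrreducibleCloseds X)
      rw [Order.krullDim_eq_bot, Order.krullDim_eq_bot]

end PartD


end Aux

/-- Dimension of `𝒳(X)`: (1) if `X` is finite with `n > 0` elements,
then `dim 𝒳(X) = n - 1`; (2) if `X` is infinite, then `dim 𝒳(X) = ∞`;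
(3) `dim 𝒳(X) ≥ dim X`; (4) if `X` is finite, `dim 𝒳(X) = dim X` iff the
specialization order on `X` is total. -/
theorem stmt11 {X : Type*} [TopologicalSpace X] (hX : IsSpectralSpace X) :
    (∀ n : ℕ, 0 < n → Nat.card X = n →
      topologicalKrullDim (XCal X) = ((n - 1 : ℕ) : WithBot ℕ∞)) ∧
    (Infinite X → topologicalKrullDim (XCal X) = ⊤) ∧
    topologicalKrullDim X ≤ topologicalKrullDim (XCal X) ∧
    (Finite X →
      (topologicalKrullDim (XCal X) = topologicalKrullDim X ↔
        ∀ x y : X, spord x y ∨ spord y x)) :=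
  ⟨fun _ hn hcard => part1 hX hn hcard, fun hinf => part2 hX hinf, part3 hX,
    fun hfin => part4 hX hfin⟩
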